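/- Let F be a field, A an n×n matrix over F, Q ∈ F[X] an irreducible polynomial of degree d, and k ≥ k′ ≥ 1. Let v satisfy Q(A)^k v = 0 and Q(A)^{k−1} v ≠ 0, and let w satisfy Q(A)^{k′} w = 0, with Q(A)^{k′−1} w not lying in the span of {Aⁱ Q(A)^{k−1} v : 0 ≤ i ≤ d−1} (in particular Q(A)^{k′−1} w ≠ 0). Then the (k + k′)·d vectors Aⁱ Q(A)ʲ v (0 ≤ i ≤ d−1, 0 ≤ j ≤ k−1) together with Aⁱ Q(A)ʲ w (0 ≤ i ≤ d−1, 0 ≤ j ≤ k′−1) are linearly independent over F. -/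

import Mathlib

open Polynomial Matrix

private lemma aux_mulVec_mul {F : Type*} [Field F] {n : ℕ} (A : Matrix (Fin n) (Fin n) F)
    (S T : Polynomial F) (u : Fin n → F) :
    (Polynomial.aeval A (S * T)).mulVec u
      = (Polynomial.aeval A S).mulVec ((Polynomial.aeval A T).mulVec u) := by
  rw [_root_.map_mul, Matrix.mulVec_mulVec]

private lemma aux_sum_mulVec {F : Type*} [Field F] {n : ℕ} {ι : Type*} (s : Finset ι)
    (f : ι → Matrix (Fin n) (Fin n) F) (u : Fin n → F) :
    (∑ i ∈ s, f i).mulVec u = ∑ i ∈ s, (f i).mulVec u := by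
  induction s using Finset.cons_induction with
  | empty => simp [Matrix.zero_mulVec]
  | cons a s ha ih => simp [Finset.sum_cons, Matrix.add_mulVec, ih]

/-- Uniqueness of Q-adic digits. -/
private lemma aux_digits {F : Type*} [Field F] {Q : Polynomial F} (hQ0 : Q ≠ 0) :
    ∀ (m : ℕ) (p : ℕ → Polynomial F), (∀ j, (p j).degree < Q.degree) →
      (∑ j ∈ Finset.range m, p j * Q ^ j) = 0 → ∀ j < m, p j = 0 := by
  intro m
  induction m with
  | zero => intro p _ _ j hj; omega
  | succ m ih =>
    intro p hdeg hsum j hj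
    have h0 : p 0 + (∑ j ∈ Finset.range m, p (j + 1) * Q ^ j) * Q = 0 := by
      rw [← hsum, Finset.sum_range_succ']
      simp only [pow_zero, mul_one]
      rw [add_comm, Finset.sum_mul]
      congr 1
      exact Finset.sum_congr rfl fun i _ => by ring
    have hp0 : p 0 = 0 := by
      by_contra hne
      have hdvd : Q ∣ p 0 := by
        refine ⟨-(∑ j ∈ Finset.range m, p (j + 1) * Q ^ j), ?_⟩
        linear_combination h0
      have := Polynomial.degree_le_of_dvd hdvd hne
      exact absurd (hdeg 0) (not_lt.mpr this)
    have hT : (∑ j ∈ Finset.range m, p (j + 1) * Q ^ j) = 0 := by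
      rw [hp0, zero_add] at h0
      rcases mul_eq_zero.mp h0 with h | h
      · exact h
      · exact absurd h hQ0
    rcases Nat.eq_zero_or_pos j with rfl | hjpos
    · exact hp0
    · have := ih (fun j => p (j + 1)) (fun j => hdeg (j + 1)) hT (j - 1) (by omega)
      simpa [Nat.sub_add_cancel hjpos] using this

/-- If a combination of the monomials `X^i Q^j` vanishes, all coefficients vanish. -/
private lemma aux_coeffs {F : Type*} [Field F] {Q : Polynomial F} {d : ℕ}
    (hQ0 : Q ≠ 0) (hd : Q.natDegree = d) (m : ℕ) (c : ℕ → ℕ → F)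
    (hsum : (∑ j ∈ Finset.range m, ∑ i ∈ Finset.range d,
      c i j • ((X : Polynomial F) ^ i * Q ^ j)) = 0) : ∀ i < d, ∀ j < m, c i j = 0 := by
  have hdegQ : Q.degree = (d : ℕ) := by rw [Polynomial.degree_eq_natDegree hQ0, hd]
  set p : ℕ → Polynomial F := fun j => ∑ i ∈ Finset.range d, Polynomial.monomial i (c i j)
    with hp
  have hdeg : ∀ j, (p j).degree < Q.degree := by
    intro j
    rw [hdegQ]
    refine lt_of_le_of_lt (Polynomial.degree_sum_le _ _) ?_
    rw [Finset.sup_lt_iff (by exact_mod_cast WithBot.bot_lt_coe (d : ℕ))]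
    intro i hi
    refine lt_of_le_of_lt (Polynomial.degree_monomial_le _ _) ?_
    exact_mod_cast Finset.mem_range.mp hi
  have hsum' : (∑ j ∈ Finset.range m, p j * Q ^ j) = 0 := by
    rw [← hsum]
    refine Finset.sum_congr rfl fun j _ => ?_
    rw [hp, Finset.sum_mul]
    refine Finset.sum_congr rfl fun i _ => ?_
    rw [← Polynomial.smul_X_eq_monomial, smul_mul_assoc]
  intro i hi j hj
  have hpj : p j = 0 := aux_digits hQ0 m p hdeg hsum' j hj
  have hco : (p j).coeff i = c i j := by
    rw [hp]
    simp only [Polynomial.finset_sum_coeff, Polynomial.coeff_monomial]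
    rw [Finset.sum_ite_eq' (Finset.range d) i (fun _ => c _ j)]
    simp [Finset.mem_range.mpr hi]
  rw [hpj] at hco
  simpa using hco.symm

/-- Fin-indexed version of `aux_coeffs`. -/
private lemma aux_coeffs' {F : Type*} [Field F] {Q : Polynomial F} {d : ℕ}
    (hQ0 : Q ≠ 0) (hd : Q.natDegree = d) (m : ℕ) (c : Fin d × Fin m → F)
    (hsum : (∑ p : Fin d × Fin m,
      c p • ((X : Polynomial F) ^ (p.1 : ℕ) * Q ^ (p.2 : ℕ))) = 0) : ∀ p, c p = 0 := by
  classical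
  set c' : ℕ → ℕ → F := fun i j =>
    if h : i < d ∧ j < m then c (⟨i, h.1⟩, ⟨j, h.2⟩) else 0 with hc'
  have hsum' : (∑ j ∈ Finset.range m, ∑ i ∈ Finset.range d,
      c' i j • ((X : Polynomial F) ^ i * Q ^ j)) = 0 := by
    rw [← hsum, Fintype.sum_prod_type_right]
    rw [← Fin.sum_univ_eq_sum_range
      (fun j => ∑ i ∈ Finset.range d, c' i j • ((X : Polynomial F) ^ i * Q ^ j)) m]
    refine Finset.sum_congr rfl fun j _ => ?_
    rw [← Fin.sum_univ_eq_sum_range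
      (fun i => c' i (j : ℕ) • ((X : Polynomial F) ^ i * Q ^ (j : ℕ))) d]
    refine Finset.sum_congr rfl fun i _ => ?_
    have hcc : c' (i : ℕ) (j : ℕ) = c (i, j) := by
      simp only [hc']
      rw [dif_pos (show (i : ℕ) < d ∧ (j : ℕ) < m from ⟨i.isLt, j.isLt⟩)]
    rw [hcc]
  intro p
  have h2 := aux_coeffs hQ0 hd m c' hsum' p.1 p.1.isLt p.2 p.2.isLt
  simp only [hc'] at h2
  rw [dif_pos (show (p.1 : ℕ) < d ∧ (p.2 : ℕ) < m from ⟨p.1.isLt, p.2.isLt⟩)] at h2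
  simpa using h2

/-- The annihilator of `v` contains only multiples of `Q ^ k`. -/
private lemma aux_ann {F : Type*} [Field F] {n : ℕ} {A : Matrix (Fin n) (Fin n) F}
    {Q : Polynomial F} (hQ : Irreducible Q) {k : ℕ} {v : Fin n → F}
    (hv : (Polynomial.aeval A (Q ^ k)).mulVec v = 0)
    (hv' : (Polynomial.aeval A (Q ^ (k - 1))).mulVec v ≠ 0)
    (S : Polynomial F) (hS : (Polynomial.aeval A S).mulVec v = 0) : Q ^ k ∣ S := by
  classical
  rcases Nat.eq_zero_or_pos k with rfl | hk
  · simpa using one_dvd S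
  have hQp : Prime Q := hQ.prime
  set D := EuclideanDomain.gcd S (Q ^ k) with hD
  have hbez : D = S * EuclideanDomain.gcdA S (Q ^ k) + Q ^ k * EuclideanDomain.gcdB S (Q ^ k) :=
    EuclideanDomain.gcd_eq_gcd_ab S (Q ^ k)
  have hDv : (Polynomial.aeval A D).mulVec v = 0 := by
    rw [hbez, map_add, Matrix.add_mulVec, mul_comm S, mul_comm (Q ^ k),
      aux_mulVec_mul, aux_mulVec_mul, hS, hv, Matrix.mulVec_zero, Matrix.mulVec_zero, add_zero]
  have hDdvd : D ∣ Q ^ k := EuclideanDomain.gcd_dvd_right _ _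
  obtain ⟨i, hik, hassoc⟩ := (dvd_prime_pow hQp k).mp hDdvd
  have hik' : i = k := by
    by_contra hne
    have hilt : i < k := lt_of_le_of_ne hik hne
    obtain ⟨u, hu⟩ := hassoc
    apply hv'
    have hQpow : (Q : Polynomial F) ^ (k - 1) = (Q ^ (k - 1 - i) * (u : Polynomial F)) * D := by
      rw [mul_assoc, mul_comm (u : Polynomial F) D, hu, ← pow_add]
      congr 1
      omega
    rw [hQpow, aux_mulVec_mul, hDv, Matrix.mulVec_zero]
  subst hik'
  exact dvd_trans hassoc.symm.dvd (EuclideanDomain.gcd_dvd_left _ _)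

/-- `natDegree` bound for digit combinations. -/
private lemma aux_deg {F : Type*} [Field F] {Q : Polynomial F} {d : ℕ}
    (hd : Q.natDegree = d) (hd1 : 0 < d) {m : ℕ} (hm : 0 < m) (c : Fin d × Fin m → F) :
    (∑ p : Fin d × Fin m,
      c p • ((X : Polynomial F) ^ (p.1 : ℕ) * Q ^ (p.2 : ℕ))).natDegree < m * d := by
  obtain ⟨m', rfl⟩ : ∃ m', m = m' + 1 := ⟨m - 1, by omega⟩
  have : (∑ p : Fin d × Fin (m' + 1),
      c p • ((X : Polynomial F) ^ (p.1 : ℕ) * Q ^ (p.2 : ℕ))).natDegree ≤ (d - 1) + m' * d := by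
    apply Polynomial.natDegree_sum_le_of_forall_le
    intro p _
    refine le_trans (Polynomial.natDegree_smul_le _ _) ?_
    refine le_trans (Polynomial.natDegree_mul_le) ?_
    have h1 : ((X : Polynomial F) ^ (p.1 : ℕ)).natDegree ≤ d - 1 := by
      rw [Polynomial.natDegree_X_pow]
      omega
    have h2 : ((Q : Polynomial F) ^ (p.2 : ℕ)).natDegree ≤ m' * d := by
      rw [Polynomial.natDegree_pow, hd]
      have : (p.2 : ℕ) ≤ m' := by omega
      exact Nat.mul_le_mul_right d this
    omega
  have hmd : (m' + 1) * d = m' * d + d := by ring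
  omega

theorem two_rational_jordan_cycles_linearIndependent
    (F : Type*) [Field F] (n : ℕ) (A : Matrix (Fin n) (Fin n) F)
    (Q : Polynomial F) (d : ℕ) (hQ : Irreducible Q) (hd : Q.natDegree = d)
    (k k' : ℕ) (hk' : 1 ≤ k') (hkk' : k' ≤ k) (v w : Fin n → F)
    (hv : ((Polynomial.aeval A Q) ^ k).mulVec v = 0)
    (hv' : ((Polynomial.aeval A Q) ^ (k - 1)).mulVec v ≠ 0)
    (hw : ((Polynomial.aeval A Q) ^ k').mulVec w = 0)
    (hw' : ((Polynomial.aeval A Q) ^ (k' - 1)).mulVec w ∉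
      Submodule.span F (Set.range fun i : Fin d =>
        (A ^ (i : ℕ) * (Polynomial.aeval A Q) ^ (k - 1)).mulVec v)) :
    LinearIndependent F
      (Sum.elim
        (fun p : Fin d × Fin k =>
          (A ^ (p.1 : ℕ) * (Polynomial.aeval A Q) ^ (p.2 : ℕ)).mulVec v)
        (fun p : Fin d × Fin k' =>
          (A ^ (p.1 : ℕ) * (Polynomial.aeval A Q) ^ (p.2 : ℕ)).mulVec w)) := by
  classical
  have hQ0 : Q ≠ 0 := hQ.ne_zero
  have hd1 : 0 < d := hd ▸ hQ.natDegree_pos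
  have hk : 0 < k := lt_of_lt_of_le hk' hkk'
  have hdegQ : Q.degree = (d : ℕ) := by rw [Polynomial.degree_eq_natDegree hQ0, hd]
  have hv2 : (Polynomial.aeval A (Q ^ k)).mulVec v = 0 := by rw [map_pow]; exact hv
  have hv'2 : (Polynomial.aeval A (Q ^ (k - 1))).mulVec v ≠ 0 := by rw [map_pow]; exact hv'
  have hw2 : (Polynomial.aeval A (Q ^ k')).mulVec w = 0 := by rw [map_pow]; exact hw
  rw [Fintype.linearIndependent_iff]
  intro g hg
  set P : Polynomial F := ∑ p : Fin d × Fin k,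
    g (Sum.inl p) • ((X : Polynomial F) ^ (p.1 : ℕ) * Q ^ (p.2 : ℕ)) with hP
  set R : Polynomial F := ∑ p : Fin d × Fin k',
    g (Sum.inr p) • ((X : Polynomial F) ^ (p.1 : ℕ) * Q ^ (p.2 : ℕ)) with hR
  have haevalP : ∀ (m : ℕ) (c : Fin d × Fin m → F) (u : Fin n → F),
      (Polynomial.aeval A (∑ p : Fin d × Fin m,
        c p • ((X : Polynomial F) ^ (p.1 : ℕ) * Q ^ (p.2 : ℕ)))).mulVec u
      = ∑ p : Fin d × Fin m,
          c p • (A ^ (p.1 : ℕ) * (Polynomial.aeval A Q) ^ (p.2 : ℕ)).mulVec u := by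
    intro m c u
    have h1 : Polynomial.aeval A (∑ p : Fin d × Fin m,
        c p • ((X : Polynomial F) ^ (p.1 : ℕ) * Q ^ (p.2 : ℕ)))
        = ∑ p : Fin d × Fin m, c p • (A ^ (p.1 : ℕ) * (Polynomial.aeval A Q) ^ (p.2 : ℕ)) := by
      rw [map_sum]
      refine Finset.sum_congr rfl fun p _ => ?_
      rw [_root_.map_smul, _root_.map_mul, map_pow, map_pow, Polynomial.aeval_X]
    rw [h1, aux_sum_mulVec]
    exact Finset.sum_congr rfl fun p _ => Matrix.smul_mulVec _ _ _
  have hrel : (Polynomial.aeval A P).mulVec v + (Polynomial.aeval A R).mulVec w = 0 := by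
    rw [hP, hR, haevalP, haevalP, ← hg, Fintype.sum_sum_type]
    simp
  -- Step 1 : R = 0
  have hR0 : R = 0 := by
    by_contra hRne
    have hdegR : R.natDegree < k' * d := hR ▸ aux_deg hd hd1 hk' _
    set b := Nat.findGreatest (fun b => Q ^ b ∣ R) k' with hb
    have hbdvd : Q ^ b ∣ R := Nat.findGreatest_spec (P := fun b => Q ^ b ∣ R)
      (Nat.zero_le k') (by simpa using one_dvd R)
    have hble : b ≤ k' := Nat.findGreatest_le k'
    have hbne : b ≠ k' := by
      intro hbk
      rw [hbk] at hbdvd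
      have := Polynomial.natDegree_le_of_dvd hbdvd hRne
      rw [Polynomial.natDegree_pow, hd] at this
      omega
    have hblt : b < k' := lt_of_le_of_ne hble hbne
    have hnb : ¬ Q ^ (b + 1) ∣ R := Nat.findGreatest_is_greatest (Nat.lt_succ_self b) (by omega)
    obtain ⟨T, hT⟩ := hbdvd
    have hQT : ¬ Q ∣ T := by
      rintro ⟨T', hT'⟩
      exact hnb ⟨T', by rw [hT, hT', pow_succ]; ring⟩
    obtain ⟨U, V, hUV⟩ := hQ.coprime_iff_not_dvd.mpr hQT
    have e1 : (Q : Polynomial F) * Q ^ (k' - 1) = Q ^ k' := by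
      rw [← pow_succ']; congr 1; omega
    have e2 : (Q : Polynomial F) ^ (k' - 1) = Q ^ (k' - 1 - b) * Q ^ b := by
      rw [← pow_add]; congr 1; omega
    have hkey : (Q : Polynomial F) ^ (k' - 1)
        = U * Q ^ k' + V * Q ^ (k' - 1 - b) * R := by
      linear_combination (-(Q ^ (k' - 1))) * hUV + U * e1
        + (-(V * Q ^ (k' - 1 - b))) * hT + (V * T) * e2
    set S : Polynomial F := -(V * Q ^ (k' - 1 - b) * P) with hSdef
    have hRw : (Polynomial.aeval A R).mulVec w = -((Polynomial.aeval A P).mulVec v) := by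
      rw [eq_neg_iff_add_eq_zero, add_comm]
      exact hrel
    have hwS : (Polynomial.aeval A (Q ^ (k' - 1))).mulVec w
        = (Polynomial.aeval A S).mulVec v := by
      rw [hkey, map_add, Matrix.add_mulVec, aux_mulVec_mul, hw2, Matrix.mulVec_zero, zero_add,
        aux_mulVec_mul, hRw, hSdef, map_neg, Matrix.neg_mulVec, Matrix.mulVec_neg,
        Matrix.mulVec_mulVec, ← _root_.map_mul]
    have hQS : (Polynomial.aeval A (Q * S)).mulVec v = 0 := by
      rw [aux_mulVec_mul, ← hwS, ← aux_mulVec_mul, e1, hw2]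
    have hdvdQS : Q ^ k ∣ Q * S := aux_ann hQ hv2 hv'2 _ hQS
    have hdvdS : Q ^ (k - 1) ∣ S := by
      have ek : (Q : Polynomial F) * Q ^ (k - 1) = Q ^ k := by
        rw [← pow_succ']; congr 1; omega
      rw [← ek] at hdvdQS
      exact (mul_dvd_mul_iff_left hQ0).mp hdvdQS
    obtain ⟨M, hM⟩ := hdvdS
    -- divide M by Q
    set Qm : Polynomial F := Q * Polynomial.C (Q.leadingCoeff)⁻¹ with hQm
    have hQmMonic : Qm.Monic := Polynomial.monic_mul_leadingCoeff_inv hQ0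
    set r : Polynomial F := M %ₘ Qm with hr
    set qq : Polynomial F := Polynomial.C (Q.leadingCoeff)⁻¹ * (M /ₘ Qm) with hqq
    have hMr : M = Q * qq + r := by
      rw [hqq, ← mul_assoc, ← hQm, add_comm]
      exact (Polynomial.modByMonic_add_div M Qm).symm
    have hrdeg : r.natDegree < d := by
      rcases eq_or_ne r 0 with h | h
      · rw [h]; simpa using hd1
      · rw [Polynomial.natDegree_lt_iff_degree_lt h]
        have := Polynomial.degree_modByMonic_lt M hQmMonic
        rw [← hr] at this
        rw [hQm] at this
        rwa [Polynomial.degree_mul_leadingCoeff_inv _ hQ0, hdegQ] at this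
    have hSv : (Polynomial.aeval A S).mulVec v
        = (Polynomial.aeval A r).mulVec ((Polynomial.aeval A (Q ^ (k - 1))).mulVec v) := by
      have ek : (Q : Polynomial F) ^ (k - 1) * Q = Q ^ k := by
        rw [← pow_succ]; congr 1; omega
      have hS2 : S = qq * Q ^ k + r * Q ^ (k - 1) := by
        rw [hM, hMr]
        linear_combination qq * ek
      rw [hS2, map_add, Matrix.add_mulVec, aux_mulVec_mul, hv2, Matrix.mulVec_zero, zero_add,
        aux_mulVec_mul]
    -- membership in the span
    apply hw'
    have hgoal : ((Polynomial.aeval A Q) ^ (k' - 1)).mulVec w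
        = ∑ i ∈ Finset.range d, r.coeff i •
            (A ^ i * (Polynomial.aeval A Q) ^ (k - 1)).mulVec v := by
      rw [← map_pow, hwS, hSv, Polynomial.aeval_eq_sum_range' (lt_of_lt_of_le hrdeg le_rfl),
        aux_sum_mulVec]
      refine Finset.sum_congr rfl fun i _ => ?_
      rw [Matrix.smul_mulVec, Matrix.mulVec_mulVec, map_pow]
    rw [hgoal]
    apply Submodule.sum_mem
    intro i hi
    apply Submodule.smul_mem
    exact Submodule.subset_span ⟨⟨i, Finset.mem_range.mp hi⟩, rfl⟩
  -- Step 2 : P = 0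
  have hPv0 : (Polynomial.aeval A P).mulVec v = 0 := by
    rw [hR0] at hrel
    simpa using hrel
  have hP0 : P = 0 := by
    by_contra hPne
    have h1 := Polynomial.natDegree_le_of_dvd (aux_ann hQ hv2 hv'2 P hPv0) hPne
    rw [Polynomial.natDegree_pow, hd] at h1
    have h2 : P.natDegree < k * d := hP ▸ aux_deg hd hd1 hk _
    omega
  -- conclude
  intro p
  rcases p with p | p
  · exact aux_coeffs' hQ0 hd k (fun p => g (Sum.inl p)) (hP ▸ hP0) p
  · exact aux_coeffs' hQ0 hd k' (fun p => g (Sum.inr p)) (hR ▸ hR0) p
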